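/- Suppose K is an infinite simplicial complex (K_q is infinite) with bounded degree, and suppose the down graph Y_q is connected. Then the down discriminant D_q^down has neither 1 nor −1 as an eigenvalue: there is no nonzero g ∈ ℓ²(K_q) with D_q^down g = g or D_q^down g = −g. -/
import Mathlib


open scoped BigOperators

/-- The set of oriented `q`-simplices of a simplicial complex, together with the
orientation-reversal involution `bar` (writing `τ̄` for `bar τ`). -/
structure OrientedSet where
  K : Type
  bar : K → K
  bar_invol : ∀ τ, bar (bar τ) = τ
  bar_ne : ∀ τ, bar τ ≠ τ

/-- The data of an up graph (`mult = 2(q+1)`) or a down graph (`mult = 2`) on the set of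
oriented `q`-simplices: the sign function `η` (extended by `0` off the edge set, so that
`(τ₁, τ₂)` is an edge iff `eta τ₁ τ₂ ≠ 0`), the degree function (`deg_X`, resp. `deg_Y`),
and local finiteness; the degree of a vertex `τ` in the graph is `mult * deg τ`. -/
structure GroverStructure (O : OrientedSet) where
  eta : O.K → O.K → ℝ
  eta_symm : ∀ τ₁ τ₂, eta τ₁ τ₂ = eta τ₂ τ₁
  eta_vals : ∀ τ₁ τ₂, eta τ₁ τ₂ = 0 ∨ eta τ₁ τ₂ = 1 ∨ eta τ₁ τ₂ = -1
  eta_bar_left : ∀ τ₁ τ₂, eta (O.bar τ₁) τ₂ = - eta τ₁ τ₂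
  eta_self : ∀ τ, eta τ τ = 0
  eta_bar_self : ∀ τ, eta τ (O.bar τ) = 0
  deg : O.K → ℕ
  deg_pos : ∀ τ, 0 < deg τ
  deg_bar : ∀ τ, deg (O.bar τ) = deg τ
  mult : ℕ
  nbhdFinite : ∀ τ, {τ' | eta τ τ' ≠ 0}.Finite
  nbhd_card : ∀ τ, (nbhdFinite τ).toFinset.card = mult * deg τ

namespace GroverStructure

variable {O : OrientedSet} (Y : GroverStructure O)

/-- `(τ₁, τ₂)` is an oriented edge of the up/down graph. -/
def Edge (τ₁ τ₂ : O.K) : Prop := Y.eta τ₁ τ₂ ≠ 0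

/-- The normalization constant `(mult * deg τ)^(-1/2)`. -/
noncomputable def c (τ : O.K) : ℂ := ((Real.sqrt (Y.mult * Y.deg τ) : ℝ) : ℂ)⁻¹

/-- The operator `d : ℓ²(E) → ℓ²(K)`; elements of `ℓ²(E)` are represented as
functions on `K × K` (supported on the set of edges). -/
noncomputable def d (g : O.K × O.K → ℂ) : O.K → ℂ :=
  fun τ => Y.c τ * ∑ᶠ τ' ∈ {τ' | Y.eta τ τ' ≠ 0}, g (τ, τ')

/-- The adjoint `d* : ℓ²(K) → ℓ²(E)`. -/
noncomputable def dstar (f : O.K → ℂ) : O.K × O.K → ℂ :=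
  fun p => if Y.eta p.1 p.2 ≠ 0 then Y.c p.1 * f p.1 else 0

/-- The shift operator `(S g)(τ₁,τ₂) = η(τ₁,τ₂) • g(τ₂,τ₁)`. -/
noncomputable def shift (g : O.K × O.K → ℂ) : O.K × O.K → ℂ :=
  fun p => (Y.eta p.1 p.2 : ℂ) * g (p.2, p.1)

/-- The discriminant operator `D = d ∘ S ∘ d*`. -/
noncomputable def disc (f : O.K → ℂ) : O.K → ℂ := Y.d (Y.shift (Y.dstar f))

/-- The Grover walk `U = S (2 d* d − I)`. -/
noncomputable def walk (g : O.K × O.K → ℂ) : O.K × O.K → ℂ :=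
  Y.shift (fun p => 2 * Y.dstar (Y.d g) p - g p)

/-- Membership in `ℓ²(E)`: square summable and supported on the edge set. -/
def MemEdge (g : O.K × O.K → ℂ) : Prop :=
  Memℓp g 2 ∧ ∀ p : O.K × O.K, ¬ Y.Edge p.1 p.2 → g p = 0

end GroverStructure

/-- The orthogonal projection of `ℓ²(K_q)` onto the cochain space
`C^q(K,ℂ) = {f : f(τ̄) = -f(τ)}`. -/
noncomputable def projC (O : OrientedSet) (f : O.K → ℂ) : O.K → ℂ :=
  fun τ => (f τ - f (O.bar τ)) / 2

/-- For an infinite simplicial complex with bounded degree whose down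
graph `Y_q` is connected, the down discriminant `D_q^down` has neither `1` nor `−1` as
an eigenvalue. -/
theorem disc_down_no_eigenvalue_pm_one_of_infinite
    (O : OrientedSet) [Infinite O.K]
    (Y : GroverStructure O) (hYm : Y.mult = 2)
    (hbdd : ∃ C : ℕ, ∀ τ, Y.deg τ ≤ C)
    (hconn : ∀ σ σ' : O.K, Relation.ReflTransGen (fun a b => Y.eta a b ≠ 0) σ σ') :
    ¬ ∃ g : O.K → ℂ, Memℓp g 2 ∧ g ≠ 0 ∧
        (Y.disc g = g ∨ Y.disc g = fun τ => - g τ) := by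
  rintro ⟨g, hg2, hne, heig⟩
  classical
  set S : O.K → Finset O.K := fun τ => (Y.nbhdFinite τ).toFinset with hS
  have hSmem : ∀ τ τ', τ' ∈ S τ ↔ Y.eta τ τ' ≠ 0 := by
    intro τ τ'; simp [hS, Set.Finite.mem_toFinset]
  set r : O.K → ℝ := fun τ => (Real.sqrt (Y.mult * Y.deg τ))⁻¹ with hr
  have hdegpos : ∀ τ, (0:ℝ) < Y.mult * Y.deg τ := by
    intro τ
    have h1 := Y.deg_pos τ
    have : (0:ℕ) < Y.mult * Y.deg τ := by rw [hYm]; positivity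
    exact_mod_cast this
  have hrpos : ∀ τ, 0 < r τ := fun τ => inv_pos.2 (Real.sqrt_pos.2 (hdegpos τ))
  have hc : ∀ τ, Y.c τ = ((r τ : ℝ) : ℂ) := by
    intro τ; simp [GroverStructure.c, hr]
  have hrsq : ∀ τ, r τ * r τ * (Y.mult * Y.deg τ) = 1 := by
    intro τ
    have h := Real.mul_self_sqrt (le_of_lt (hdegpos τ))
    rw [hr]
    simp only []
    rw [← mul_inv, h]
    exact inv_mul_cancel₀ (ne_of_gt (hdegpos τ))
  have hdiscf : ∀ τ, Y.disc g τ =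
      (Y.c τ) * ∑ τ' ∈ S τ, (Y.eta τ τ' : ℂ) * (Y.c τ' * g τ') := by
    intro τ
    have h0 : Y.disc g τ = Y.c τ *
        ∑ᶠ τ' ∈ {τ' | Y.eta τ τ' ≠ 0}, Y.shift (Y.dstar g) (τ, τ') := rfl
    rw [h0, finsum_mem_eq_finite_toFinset_sum _ (Y.nbhdFinite τ)]
    congr 1
    apply Finset.sum_congr rfl
    intro τ' hτ'
    rw [hSmem] at hτ'
    have hsym : Y.eta τ' τ = Y.eta τ τ' := Y.eta_symm τ' τ
    simp [GroverStructure.shift, GroverStructure.dstar, hsym, hτ', mul_assoc]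
  set φ : O.K → ℝ := fun τ => r τ * ‖g τ‖ with hφ
  have hφnn : ∀ τ, 0 ≤ φ τ := fun τ => mul_nonneg (le_of_lt (hrpos τ)) (norm_nonneg _)
  have hgnorm : ∀ τ, ‖g τ‖ = ‖Y.disc g τ‖ := by
    rcases heig with h | h
    · intro τ; rw [h]
    · intro τ; rw [h]; simp
  -- key subharmonicity inequality
  have hkey : ∀ τ, (Y.mult * Y.deg τ : ℝ) * φ τ ≤ ∑ τ' ∈ S τ, φ τ' := by
    intro τ
    have h1 : ‖g τ‖ ≤ r τ * ∑ τ' ∈ S τ, φ τ' := by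
      rw [hgnorm τ, hdiscf τ, hc τ, norm_mul]
      have hn : ‖((r τ : ℝ) : ℂ)‖ = r τ := by
        rw [Complex.norm_real, Real.norm_eq_abs, abs_of_pos (hrpos τ)]
      rw [hn]
      have h2 : ‖∑ τ' ∈ S τ, (Y.eta τ τ' : ℂ) * (Y.c τ' * g τ')‖ ≤
          ∑ τ' ∈ S τ, φ τ' := by
        refine le_trans (norm_sum_le _ _) (Finset.sum_le_sum ?_)
        intro τ' _
        rw [norm_mul, norm_mul, hc τ']
        have he : ‖((Y.eta τ τ' : ℝ) : ℂ)‖ ≤ 1 := by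
          rcases Y.eta_vals τ τ' with h | h | h <;> simp [h]
        have hrn : ‖((r τ' : ℝ) : ℂ)‖ = r τ' := by
          rw [Complex.norm_real, Real.norm_eq_abs, abs_of_pos (hrpos τ')]
        calc ‖((Y.eta τ τ' : ℝ) : ℂ)‖ * (‖((r τ' : ℝ) : ℂ)‖ * ‖g τ'‖)
            ≤ 1 * (‖((r τ' : ℝ) : ℂ)‖ * ‖g τ'‖) := by
              apply mul_le_mul_of_nonneg_right he; positivity
          _ = φ τ' := by rw [one_mul, hrn]
      exact mul_le_mul_of_nonneg_left h2 (le_of_lt (hrpos τ))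
    have h3 : φ τ ≤ r τ * r τ * ∑ τ' ∈ S τ, φ τ' := by
      calc φ τ = r τ * ‖g τ‖ := rfl
        _ ≤ r τ * (r τ * ∑ τ' ∈ S τ, φ τ') :=
            mul_le_mul_of_nonneg_left h1 (le_of_lt (hrpos τ))
        _ = r τ * r τ * ∑ τ' ∈ S τ, φ τ' := by ring
    calc (Y.mult * Y.deg τ : ℝ) * φ τ
        ≤ (Y.mult * Y.deg τ : ℝ) * (r τ * r τ * ∑ τ' ∈ S τ, φ τ') :=
          mul_le_mul_of_nonneg_left h3 (le_of_lt (hdegpos τ))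
      _ = (r τ * r τ * (Y.mult * Y.deg τ)) * ∑ τ' ∈ S τ, φ τ' := by ring
      _ = ∑ τ' ∈ S τ, φ τ' := by rw [hrsq τ, one_mul]
  -- superlevel sets of φ are finite
  have hr1 : ∀ τ, r τ ≤ 1 := by
    intro τ
    have h1 : (1:ℝ) ≤ Y.mult * Y.deg τ := by
      have h1 := Y.deg_pos τ
      have : (1:ℕ) ≤ Y.mult * Y.deg τ := by rw [hYm]; omega
      exact_mod_cast this
    have : (1:ℝ) ≤ Real.sqrt (Y.mult * Y.deg τ) := by
      rw [show (1:ℝ) = Real.sqrt 1 by simp]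
      exact Real.sqrt_le_sqrt h1
    rw [hr]
    exact inv_le_one_of_one_le₀ this
  have hφle : ∀ τ, φ τ ≤ ‖g τ‖ := by
    intro τ
    calc φ τ = r τ * ‖g τ‖ := rfl
      _ ≤ 1 * ‖g τ‖ := mul_le_mul_of_nonneg_right (hr1 τ) (norm_nonneg _)
      _ = ‖g τ‖ := one_mul _
  have hfin : ∀ ε : ℝ, 0 < ε → {τ | ε ≤ φ τ}.Finite := by
    intro ε hε
    have hsum : Summable fun τ => ‖g τ‖ ^ (2:ENNReal).toReal :=
      hg2.summable (by norm_num)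
    have htend := hsum.tendsto_cofinite_zero
    have hev : ∀ᶠ τ in Filter.cofinite, ‖g τ‖ ^ (2:ENNReal).toReal < ε ^ 2 :=
      htend.eventually (eventually_lt_nhds (by positivity : (0:ℝ) < ε ^ 2))
    refine (Filter.eventually_cofinite.mp hev).subset ?_
    intro τ hτ
    simp only [Set.mem_setOf_eq] at hτ ⊢
    intro hlt
    have hge : ε ≤ ‖g τ‖ := le_trans hτ (hφle τ)
    have : ε ^ 2 ≤ ‖g τ‖ ^ (2:ENNReal).toReal := by
      have h2 : (2:ENNReal).toReal = 2 := by norm_num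
      rw [h2, show ‖g τ‖ ^ (2:ℝ) = ‖g τ‖ ^ (2:ℕ) by
        rw [← Real.rpow_natCast]; norm_num]
      exact pow_le_pow_left₀ (le_of_lt hε) hge 2
    linarith
  -- get the maximizer
  obtain ⟨τ₀, hτ₀⟩ : ∃ τ, g τ ≠ 0 := Function.ne_iff.mp hne
  have hφ₀ : 0 < φ τ₀ := mul_pos (hrpos τ₀) (norm_pos_iff.2 hτ₀)
  have hA : {τ | φ τ₀ ≤ φ τ}.Finite := hfin _ hφ₀
  have hAne : hA.toFinset.Nonempty := ⟨τ₀, by simp⟩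
  obtain ⟨τs, hτsA, hτsmax⟩ := Finset.exists_max_image hA.toFinset φ hAne
  have hτs0 : φ τ₀ ≤ φ τs := (hA.mem_toFinset.mp hτsA)
  have hmax : ∀ τ, φ τ ≤ φ τs := by
    intro τ
    by_cases h : φ τ₀ ≤ φ τ
    · exact hτsmax τ (hA.mem_toFinset.mpr h)
    · linarith [not_le.mp h]
  set M := φ τs with hM
  have hMpos : 0 < M := lt_of_lt_of_le hφ₀ hτs0
  -- maximum principle: neighbors of a maximizer are maximizers
  have hstep : ∀ τ τ', φ τ = M → Y.eta τ τ' ≠ 0 → φ τ' = M := by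
    intro τ τ' hτM hedge
    by_contra hlt'
    have hlt : φ τ' < M := lt_of_le_of_ne (hmax τ') hlt'
    have hτ'mem : τ' ∈ S τ := (hSmem τ τ').mpr hedge
    have hsumlt : ∑ σ ∈ S τ, φ σ < (S τ).card * M := by
      have := Finset.sum_lt_sum (f := φ) (g := fun _ => M)
        (fun σ hσ => hmax σ) ⟨τ', hτ'mem, hlt⟩
      simpa [Finset.sum_const, nsmul_eq_mul] using this
    have hcard : ((S τ).card : ℝ) = (Y.mult * Y.deg τ : ℝ) := by
      have := Y.nbhd_card τ
      rw [hS] at *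
      push_cast [this]
      ring
    have := hkey τ
    rw [hτM] at this
    rw [hcard] at hsumlt
    linarith
  -- propagate along connectivity
  have hconst : ∀ σ, φ σ = M := by
    intro σ
    have hpath := hconn τs σ
    induction hpath with
    | refl => rfl
    | tail _ hedge ih => exact hstep _ _ ih hedge
  -- contradiction with finiteness
  have : ({τ | M ≤ φ τ} : Set O.K) = Set.univ := by
    ext τ; simp [hconst τ]
  have hinf : ({τ | M ≤ φ τ} : Set O.K).Infinite := by
    rw [this]; exact Set.infinite_univ
  exact hinf (hfin M hMpos)
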